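/- Let V be a real Hilbert space with inner product a and induced norm ‖·‖. If P : V → V is a bounded linear oblique projection (P² = P) with P ≠ 0 and P ≠ id, then the operator norms satisfy ‖id − P‖ = ‖P‖. -/

import Mathlib

lemma kato_one_le_norm {V : Type*} [NormedAddCommGroup V] [InnerProductSpace ℝ V]
    (P : V →L[ℝ] V) (hidem : P.comp P = P) (h0 : P ≠ 0) : 1 ≤ ‖P‖ := by
  obtain ⟨y, hy⟩ : ∃ y, P y ≠ 0 := by
    by_contra h
    push_neg at h
    exact h0 (ContinuousLinearMap.ext fun y => h y)
  have h1 : P (P y) = P y := by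
    have := congrArg (fun T : V →L[ℝ] V => T y) hidem
    simpa using this
  have h2 : ‖P (P y)‖ ≤ ‖P‖ * ‖P y‖ := P.le_opNorm _
  rw [h1] at h2
  have hpos : 0 < ‖P y‖ := norm_pos_iff.mpr hy
  nlinarith

set_option maxHeartbeats 1000000 in
lemma kato_aux {V : Type*} [NormedAddCommGroup V] [InnerProductSpace ℝ V]
    (P : V →L[ℝ] V) (hidem : P.comp P = P) (h0 : P ≠ 0) (x : V) :
    ‖x - P x‖ ≤ ‖P‖ * ‖x‖ := by
  have hk : (1 : ℝ) ≤ ‖P‖ := kato_one_le_norm P hidem h0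
  set u : V := P x with hu
  set v : V := x - P x with hv
  by_cases hv0 : v = 0
  · rw [hv0, norm_zero]
    positivity
  · have hPu : P u = u := by
      have := congrArg (fun T : V →L[ℝ] V => T x) hidem
      simpa using this
    have hPv : P v = 0 := by
      simp [hv, map_sub, hPu, ← hu]
    set k : ℝ := ‖P‖ with hkdef
    set a : ℝ := ‖u‖ with ha
    set b : ℝ := ‖v‖ with hb
    set c : ℝ := inner ℝ u v with hc
    have hbpos : 0 < b := norm_pos_iff.mpr hv0
    set t : ℝ := c / b ^ 2 with ht
    have hPut : P (u - t • v) = u := by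
      simp [map_sub, map_smul, hPu, hPv]
    have h1 : a ≤ k * ‖u - t • v‖ := by
      have := P.le_opNorm (u - t • v)
      rw [hPut] at this
      exact this
    have hsm : ‖t • v‖ ^ 2 = t ^ 2 * b ^ 2 := by
      rw [norm_smul, mul_pow, Real.norm_eq_abs, sq_abs, ← hb]
    have hns : ‖u - t • v‖ ^ 2 = a ^ 2 - 2 * t * c + t ^ 2 * b ^ 2 := by
      rw [@norm_sub_sq_real, real_inner_smul_right, hsm, ← hc, ← ha]
      ring
    have h2 : a ^ 2 ≤ k ^ 2 * ‖u - t • v‖ ^ 2 := by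
      have hn : (0:ℝ) ≤ ‖u - t • v‖ := norm_nonneg _
      nlinarith [norm_nonneg u]
    rw [hns] at h2
    have hb2 : (0:ℝ) < b ^ 2 := by positivity
    have hx : x = u + v := by rw [hu, hv]; abel
    have hxs : ‖x‖ ^ 2 = a ^ 2 + 2 * c + b ^ 2 := by
      rw [hx, @norm_add_sq_real, ← hc, ← ha, ← hb]
    have hann : (0:ℝ) ≤ a := norm_nonneg u
    clear_value t c b a k v u
    clear hns hsm h1 hPut hPu hPv hv0 hx
    have h3 : k ^ 2 * c ^ 2 ≤ (k ^ 2 - 1) * (a ^ 2 * b ^ 2) := by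
      have e : a ^ 2 - 2 * t * c + t ^ 2 * b ^ 2 = (a ^ 2 * b ^ 2 - c ^ 2) / b ^ 2 := by
        rw [ht]; field_simp; ring
      rw [e] at h2
      have h2' := mul_le_mul_of_nonneg_right h2 hb2.le
      rw [mul_assoc, div_mul_cancel₀ _ hb2.ne'] at h2'
      nlinarith [h2']
    have hgoal2 : b ^ 2 ≤ (k * ‖x‖) ^ 2 := by
      rw [mul_pow, hxs]
      have hk1 : (0:ℝ) ≤ k ^ 2 - 1 := by nlinarith
      rcases le_or_gt 0 c with hcpos | hcneg
      · nlinarith [mul_nonneg hk1 (sq_nonneg b), mul_nonneg (sq_nonneg k) hcpos,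
          mul_nonneg (sq_nonneg k) (sq_nonneg a)]
      · have hD0 : (0:ℝ) ≤ k ^ 2 * a ^ 2 + (k ^ 2 - 1) * b ^ 2 := by
          nlinarith [mul_nonneg hk1 (sq_nonneg b), mul_nonneg (sq_nonneg k) (sq_nonneg a)]
        have h4 : (2 * k ^ 2 * (-c)) ^ 2 ≤ (k ^ 2 * a ^ 2 + (k ^ 2 - 1) * b ^ 2) ^ 2 := by
          nlinarith [sq_nonneg (k ^ 2 * a ^ 2 - (k ^ 2 - 1) * b ^ 2),
            mul_le_mul_of_nonneg_left h3 (sq_nonneg k)]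
        have h5 : 2 * k ^ 2 * (-c) ≤ k ^ 2 * a ^ 2 + (k ^ 2 - 1) * b ^ 2 :=
          le_of_pow_le_pow_left₀ two_ne_zero hD0 h4
        linarith
    have hkx : (0:ℝ) ≤ k * ‖x‖ := by positivity
    exact le_of_pow_le_pow_left₀ two_ne_zero hkx hgoal2

/-- Kato's lemma: for a nontrivial oblique projection `P` on a real Hilbert space,
`‖id - P‖ = ‖P‖`. -/
theorem kato_projection_norm {V : Type*} [NormedAddCommGroup V] [InnerProductSpace ℝ V]
    [CompleteSpace V] (P : V →L[ℝ] V) (hidem : P.comp P = P) (h0 : P ≠ 0)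
    (h1 : P ≠ ContinuousLinearMap.id ℝ V) :
    ‖ContinuousLinearMap.id ℝ V - P‖ = ‖P‖ := by
  set Q : V →L[ℝ] V := ContinuousLinearMap.id ℝ V - P with hQ
  have hQidem : Q.comp Q = Q := by
    ext x
    simp only [hQ, ContinuousLinearMap.comp_apply, ContinuousLinearMap.sub_apply,
      ContinuousLinearMap.id_apply, map_sub]
    have : P (P x) = P x := by
      have := congrArg (fun T : V →L[ℝ] V => T x) hidem
      simpa using this
    rw [this]
    abel
  have hQ0 : Q ≠ 0 := by
    intro h
    apply h1
    ext x
    have := congrArg (fun T : V →L[ℝ] V => T x) h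
    simp only [hQ, ContinuousLinearMap.sub_apply, ContinuousLinearMap.id_apply,
      ContinuousLinearMap.zero_apply] at this
    simpa [ContinuousLinearMap.id_apply] using (sub_eq_zero.mp this).symm
  apply le_antisymm
  · apply ContinuousLinearMap.opNorm_le_bound _ (norm_nonneg P)
    intro x
    have := kato_aux P hidem h0 x
    simpa [hQ] using this
  · apply ContinuousLinearMap.opNorm_le_bound _ (norm_nonneg Q)
    intro x
    have := kato_aux Q hQidem hQ0 x
    have hqx : x - Q x = P x := by simp [hQ]
    rwa [hqx] at this
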